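/- For the cut function C built from the mutual-information capacities ρ_l(U,W) = I(X_U; Ŷ_W | X_{O_l\U}) on a layered network, and any Ω ⊆ V, C(Ω) = Σ_{l=1}^{L−1} I(X_{Ω∩O_l}; Ŷ_{O_{l+1}\Ω} | X_{O_l\Ω}) = I(Ŷ_{Ω^c}; X_Ω | X_{Ω^c}), where Ŷ_{Ω^c} = (Ŷ_v)_{v∈Ω^c} and X_Ω = (X_v)_{v∈Ω}. -/

import Mathlib

open Finset

noncomputable section

/-- Probability that the discrete random variable `Z` takes the value `b`,
under the weight function `p` on the finite sample space `Ω`. -/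
def prOf {Ω : Type} [Fintype Ω] (p : Ω → ℝ) {β : Type} [DecidableEq β]
    (Z : Ω → β) (b : β) : ℝ :=
  ∑ ω, if Z ω = b then p ω else 0

/-- Shannon entropy (base 2) of a discrete random variable. -/
def ent {Ω : Type} [Fintype Ω] (p : Ω → ℝ) {β : Type} [Fintype β] [DecidableEq β]
    (Z : Ω → β) : ℝ :=
  -∑ b, prOf p Z b * Real.logb 2 (prOf p Z b)

/-- Conditional entropy `H(Z | W)`. -/
def condEnt {Ω : Type} [Fintype Ω] (p : Ω → ℝ) {β γ : Type} [Fintype β] [DecidableEq β]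
    [Fintype γ] [DecidableEq γ] (Z : Ω → β) (W : Ω → γ) : ℝ :=
  ent p (fun ω => (Z ω, W ω)) - ent p W

/-- Mutual information `I(Z₁; Z₂)`. -/
def mi {Ω : Type} [Fintype Ω] (p : Ω → ℝ) {β₁ β₂ : Type} [Fintype β₁] [DecidableEq β₁]
    [Fintype β₂] [DecidableEq β₂] (Z₁ : Ω → β₁) (Z₂ : Ω → β₂) : ℝ :=
  ent p Z₁ + ent p Z₂ - ent p (fun ω => (Z₁ ω, Z₂ ω))

/-- Conditional mutual information `I(Z₁; Z₂ | W)`. -/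
def condMI {Ω : Type} [Fintype Ω] (p : Ω → ℝ) {β₁ β₂ γ : Type} [Fintype β₁] [DecidableEq β₁]
    [Fintype β₂] [DecidableEq β₂] [Fintype γ] [DecidableEq γ]
    (Z₁ : Ω → β₁) (Z₂ : Ω → β₂) (W : Ω → γ) : ℝ :=
  condEnt p Z₁ W + condEnt p Z₂ W - condEnt p (fun ω => (Z₁ ω, Z₂ ω)) W

/-- The joint random variable `(X_a)_{a ∈ A}` over a finite index set `A`. -/
def joint {Ω ι β : Type} (X : ι → Ω → β) (A : Finset ι) : Ω → (A → β) :=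
  fun ω a => X a.1 ω

section MyLemmas
variable {Ω : Type} [Fintype Ω] (p : Ω → ℝ)

theorem my_prOf_nonneg (hp : ∀ ω, 0 ≤ p ω) {β : Type} [DecidableEq β] (Z : Ω → β) (b : β) :
    0 ≤ prOf p Z b := by
  refine Finset.sum_nonneg fun ω _ => ?_
  try dsimp only
  split
  · exact hp ω
  · exact le_refl 0

theorem my_prOf_comp {β β' : Type} [DecidableEq β] [DecidableEq β'] [Fintype β]
    (Z : Ω → β) (g : β → β') (b : β') :
    prOf p (fun ω => g (Z ω)) b = ∑ s, if g s = b then prOf p Z s else 0 := by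
  unfold prOf
  have h1 : ∀ s : β, (if g s = b then ∑ ω, if Z ω = s then p ω else 0 else 0)
      = ∑ ω, if Z ω = s then (if g s = b then p ω else 0) else 0 := by
    intro s; split_ifs <;> simp
  simp only [h1]
  rw [Finset.sum_comm]
  refine Finset.sum_congr rfl fun ω _ => ?_
  rw [Finset.sum_ite_eq]
  simp

theorem my_prOf_inj {β β' : Type} [DecidableEq β] [DecidableEq β']
    (Z : Ω → β) (g : β → β') (hg : Function.Injective g) (b : β) :
    prOf p (fun ω => g (Z ω)) (g b) = prOf p Z b := by
  unfold prOf
  exact Finset.sum_congr rfl fun ω _ => by simp [hg.eq_iff]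

theorem my_prOf_fst {β₁ β₂ : Type} [DecidableEq β₁] [DecidableEq β₂] [Fintype β₂]
    (Z₁ : Ω → β₁) (Z₂ : Ω → β₂) (b₁ : β₁) :
    prOf p Z₁ b₁ = ∑ b₂, prOf p (fun ω => (Z₁ ω, Z₂ ω)) (b₁, b₂) := by
  unfold prOf
  rw [Finset.sum_comm]
  refine Finset.sum_congr rfl fun ω _ => ?_
  by_cases h : Z₁ ω = b₁
  · simp [Prod.ext_iff, h, Finset.sum_ite_eq]
  · simp [Prod.ext_iff, h]

theorem my_prOf_snd {β₁ β₂ : Type} [DecidableEq β₁] [DecidableEq β₂] [Fintype β₁]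
    (Z₁ : Ω → β₁) (Z₂ : Ω → β₂) (b₂ : β₂) :
    prOf p Z₂ b₂ = ∑ b₁, prOf p (fun ω => (Z₁ ω, Z₂ ω)) (b₁, b₂) := by
  unfold prOf
  rw [Finset.sum_comm]
  refine Finset.sum_congr rfl fun ω _ => ?_
  by_cases h : Z₂ ω = b₂
  · simp [Prod.ext_iff, h, Finset.sum_ite_eq]
  · simp [Prod.ext_iff, h]

theorem my_ent_comp {β β' : Type} [Fintype β] [DecidableEq β] [Fintype β'] [DecidableEq β']
    (Z : Ω → β) (g : β → β') (hg : Function.Injective g) :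
    ent p (fun ω => g (Z ω)) = ent p Z := by
  unfold ent
  congr 1
  rw [← Finset.sum_subset (Finset.subset_univ ((univ : Finset β).image g))]
  · rw [Finset.sum_image (fun x _ y _ h => hg h)]
    refine Finset.sum_congr rfl fun b _ => ?_
    rw [my_prOf_inj p Z g hg b]
  · intro b' _ hb'
    have : prOf p (fun ω => g (Z ω)) b' = 0 := by
      unfold prOf
      refine Finset.sum_eq_zero fun ω _ => ?_
      rw [if_neg]
      intro h
      exact hb' (Finset.mem_image.2 ⟨Z ω, Finset.mem_univ _, h⟩)
    simp [this]

theorem my_ent_subsingleton {β : Type} [Fintype β] [DecidableEq β] [Subsingleton β]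
    (hp1 : ∑ ω, p ω = 1) (Z : Ω → β) : ent p Z = 0 := by
  unfold ent
  rw [Finset.sum_eq_zero, neg_zero]
  intro b _
  have h1 : prOf p Z b = 1 := by
    unfold prOf
    rw [← hp1]
    exact Finset.sum_congr rfl fun ω _ => by simp [Subsingleton.elim (Z ω) b]
  simp [h1]

theorem my_condEnt_chain {β₁ β₂ γ' : Type} [Fintype β₁] [DecidableEq β₁] [Fintype β₂]
    [DecidableEq β₂] [Fintype γ'] [DecidableEq γ']
    (Z₁ : Ω → β₁) (Z₂ : Ω → β₂) (W : Ω → γ') :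
    condEnt p (fun ω => (Z₁ ω, Z₂ ω)) W
      = condEnt p Z₁ W + condEnt p Z₂ (fun ω => (Z₁ ω, W ω)) := by
  have h : ent p (fun ω => (Z₂ ω, (Z₁ ω, W ω))) = ent p (fun ω => ((Z₁ ω, Z₂ ω), W ω)) := by
    refine my_ent_comp p (fun ω => ((Z₁ ω, Z₂ ω), W ω)) (fun x => (x.1.2, (x.1.1, x.2))) ?_
    rintro ⟨⟨a, b⟩, c⟩ ⟨⟨a', b'⟩, c'⟩ h
    simp only [Prod.mk.injEq] at h ⊢
    tauto
  unfold condEnt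
  rw [h]
  ring

theorem my_condMI_sub {β₁ β₂ γ' : Type} [Fintype β₁] [DecidableEq β₁] [Fintype β₂]
    [DecidableEq β₂] [Fintype γ'] [DecidableEq γ']
    (Z₁ : Ω → β₁) (Z₂ : Ω → β₂) (W : Ω → γ') :
    condMI p Z₁ Z₂ W = condEnt p Z₂ W - condEnt p Z₂ (fun ω => (Z₁ ω, W ω)) := by
  have h : ent p (fun ω => (Z₂ ω, (Z₁ ω, W ω))) = ent p (fun ω => ((Z₁ ω, Z₂ ω), W ω)) := by
    refine my_ent_comp p (fun ω => ((Z₁ ω, Z₂ ω), W ω)) (fun x => (x.1.2, (x.1.1, x.2))) ?_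
    rintro ⟨⟨a, b⟩, c⟩ ⟨⟨a', b'⟩, c'⟩ h
    simp only [Prod.mk.injEq] at h ⊢
    tauto
  unfold condMI condEnt
  rw [h]
  ring

theorem my_condMI_comm {β₁ β₂ γ' : Type} [Fintype β₁] [DecidableEq β₁] [Fintype β₂]
    [DecidableEq β₂] [Fintype γ'] [DecidableEq γ']
    (Z₁ : Ω → β₁) (Z₂ : Ω → β₂) (W : Ω → γ') :
    condMI p Z₁ Z₂ W = condMI p Z₂ Z₁ W := by
  have h : ent p (fun ω => ((Z₂ ω, Z₁ ω), W ω)) = ent p (fun ω => ((Z₁ ω, Z₂ ω), W ω)) := by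
    refine my_ent_comp p (fun ω => ((Z₁ ω, Z₂ ω), W ω)) (fun x => ((x.1.2, x.1.1), x.2)) ?_
    rintro ⟨⟨a, b⟩, c⟩ ⟨⟨a', b'⟩, c'⟩ h
    simp only [Prod.mk.injEq] at h ⊢
    tauto
  unfold condMI condEnt
  rw [h]
  ring

theorem my_sum_comm3 {α₁ α₂ α₃ : Type} [Fintype α₁] [Fintype α₂] [Fintype α₃]
    (h : α₁ → α₂ → α₃ → ℝ) :
    (∑ a, ∑ b, ∑ c, h a b c) = ∑ a, ∑ c, ∑ b, h a b c :=
  Finset.sum_congr rfl fun a _ => Finset.sum_comm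

theorem my_condMI_vanish {β₁ β₂ γ' : Type} [Fintype β₁] [DecidableEq β₁] [Fintype β₂]
    [DecidableEq β₂] [Fintype γ'] [DecidableEq γ'] (hp : ∀ ω, 0 ≤ p ω)
    (Z₁ : Ω → β₁) (Z₂ : Ω → β₂) (W : Ω → γ')
    (f : β₁ → γ' → ℝ) (g : β₂ → γ' → ℝ)
    (hfg : ∀ b₁ b₂ c, prOf p (fun ω => (Z₁ ω, Z₂ ω, W ω)) (b₁, b₂, c) = f b₁ c * g b₂ c) :
    condMI p Z₁ Z₂ W = 0 := by
  classical
  set F : γ' → ℝ := fun c => ∑ b₁, f b₁ c with hF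
  set G : γ' → ℝ := fun c => ∑ b₂, g b₂ c with hG
  have key1 : ∀ b₁ b₂ c, prOf p (fun ω => ((Z₁ ω, W ω), Z₂ ω)) ((b₁, c), b₂) = f b₁ c * g b₂ c := by
    intro b₁ b₂ c
    have h := my_prOf_inj p (fun ω => (Z₁ ω, Z₂ ω, W ω)) (fun s => ((s.1, s.2.2), s.2.1))
      (by rintro ⟨a, b, c⟩ ⟨a', b', c'⟩ h; simp only [Prod.mk.injEq] at h ⊢; tauto) (b₁, b₂, c)
    rw [← hfg b₁ b₂ c]
    exact h
  have key2 : ∀ b₁ b₂ c, prOf p (fun ω => ((Z₂ ω, W ω), Z₁ ω)) ((b₂, c), b₁) = f b₁ c * g b₂ c := by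
    intro b₁ b₂ c
    have h := my_prOf_inj p (fun ω => (Z₁ ω, Z₂ ω, W ω)) (fun s => ((s.2.1, s.2.2), s.1))
      (by rintro ⟨a, b, c⟩ ⟨a', b', c'⟩ h; simp only [Prod.mk.injEq] at h ⊢; tauto) (b₁, b₂, c)
    rw [← hfg b₁ b₂ c]
    exact h
  have hP1 : ∀ b₁ c, prOf p (fun ω => (Z₁ ω, W ω)) (b₁, c) = f b₁ c * G c := by
    intro b₁ c
    rw [my_prOf_fst p (fun ω => (Z₁ ω, W ω)) Z₂ (b₁, c),
      Finset.sum_congr rfl fun b₂ _ => key1 b₁ b₂ c, ← Finset.mul_sum]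
  have hP2 : ∀ b₂ c, prOf p (fun ω => (Z₂ ω, W ω)) (b₂, c) = F c * g b₂ c := by
    intro b₂ c
    rw [my_prOf_fst p (fun ω => (Z₂ ω, W ω)) Z₁ (b₂, c),
      Finset.sum_congr rfl fun b₁ _ => key2 b₁ b₂ c, ← Finset.sum_mul]
  have hPW : ∀ c, prOf p W c = F c * G c := by
    intro c
    rw [my_prOf_snd p Z₂ W c, Finset.sum_congr rfl fun b₂ _ => hP2 b₂ c, ← Finset.mul_sum]
  -- termwise key identity
  have key : ∀ b₁ b₂ c,
      f b₁ c * g b₂ c * Real.logb 2 (f b₁ c * g b₂ c)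
        + f b₁ c * g b₂ c * Real.logb 2 (F c * G c)
      = f b₁ c * g b₂ c * Real.logb 2 (f b₁ c * G c)
        + f b₁ c * g b₂ c * Real.logb 2 (F c * g b₂ c) := by
    intro b₁ b₂ c
    by_cases hfz : f b₁ c = 0
    · simp [hfz]
    by_cases hgz : g b₂ c = 0
    · simp [hgz]
    have hfg0 : f b₁ c * g b₂ c ≠ 0 := mul_ne_zero hfz hgz
    have hpos : 0 < f b₁ c * g b₂ c := by
      have h0 := my_prOf_nonneg p hp (fun ω => (Z₁ ω, Z₂ ω, W ω)) (b₁, b₂, c)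
      rw [hfg b₁ b₂ c] at h0
      exact lt_of_le_of_ne h0 (Ne.symm hfg0)
    have hmono : prOf p (fun ω => (Z₁ ω, Z₂ ω, W ω)) (b₁, b₂, c) ≤ prOf p W c := by
      refine Finset.sum_le_sum fun ω _ => ?_
      dsimp only
      split_ifs with h1 h2
      · exact le_refl _
      · exact absurd (congrArg (fun s => s.2.2) h1) h2
      · exact hp ω
      · exact le_refl 0
    rw [hfg b₁ b₂ c, hPW c] at hmono
    have hFG : 0 < F c * G c := lt_of_lt_of_le hpos hmono
    have hF0 : F c ≠ 0 := left_ne_zero_of_mul hFG.ne'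
    have hG0 : G c ≠ 0 := right_ne_zero_of_mul hFG.ne'
    rw [Real.logb_mul hfz hgz, Real.logb_mul hF0 hG0, Real.logb_mul hfz hG0,
      Real.logb_mul hF0 hgz]
    ring
  -- main summed identity
  have main :
      (∑ s : β₁ × β₂ × γ',
          prOf p (fun ω => (Z₁ ω, Z₂ ω, W ω)) s
            * Real.logb 2 (prOf p (fun ω => (Z₁ ω, Z₂ ω, W ω)) s))
        + ∑ c, prOf p W c * Real.logb 2 (prOf p W c)
      = (∑ y : β₁ × γ',
          prOf p (fun ω => (Z₁ ω, W ω)) y * Real.logb 2 (prOf p (fun ω => (Z₁ ω, W ω)) y))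
        + ∑ y : β₂ × γ',
          prOf p (fun ω => (Z₂ ω, W ω)) y * Real.logb 2 (prOf p (fun ω => (Z₂ ω, W ω)) y) := by
    simp only [Fintype.sum_prod_type]
    simp only [hfg, hP1, hP2, hPW]
    have hFGprod : ∀ c, F c * G c = ∑ b₁, ∑ b₂, f b₁ c * g b₂ c := fun c =>
      Finset.sum_mul_sum _ _ _ _
    have A2 : (∑ c, F c * G c * Real.logb 2 (F c * G c))
        = ∑ b₁, ∑ b₂, ∑ c, f b₁ c * g b₂ c * Real.logb 2 (F c * G c) := by
      have h1 : (∑ c, F c * G c * Real.logb 2 (F c * G c))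
          = ∑ c, ∑ b₁, ∑ b₂, f b₁ c * g b₂ c * Real.logb 2 (F c * G c) := by
        refine Finset.sum_congr rfl fun c _ => ?_
        refine Eq.symm ?_
        simp only [← Finset.sum_mul]
        exact congrArg (· * Real.logb 2 (F c * G c)) (hFGprod c).symm
      rw [h1, Finset.sum_comm]
      exact Finset.sum_congr rfl fun b₁ _ => Finset.sum_comm
    have A3 : (∑ b₁, ∑ c, f b₁ c * G c * Real.logb 2 (f b₁ c * G c))
        = ∑ b₁, ∑ b₂, ∑ c, f b₁ c * g b₂ c * Real.logb 2 (f b₁ c * G c) := by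
      refine Finset.sum_congr rfl fun b₁ _ => ?_
      have h1 : (∑ c, f b₁ c * G c * Real.logb 2 (f b₁ c * G c))
          = ∑ c, ∑ b₂, f b₁ c * g b₂ c * Real.logb 2 (f b₁ c * G c) := by
        refine Finset.sum_congr rfl fun c _ => ?_
        refine Eq.symm ?_
        simp only [← Finset.sum_mul]
        refine congrArg (· * Real.logb 2 (f b₁ c * G c)) ?_
        rw [← Finset.mul_sum]
      rw [h1]
      exact Finset.sum_comm
    have A4 : (∑ b₂, ∑ c, F c * g b₂ c * Real.logb 2 (F c * g b₂ c))
        = ∑ b₁, ∑ b₂, ∑ c, f b₁ c * g b₂ c * Real.logb 2 (F c * g b₂ c) := by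
      have h1 : (∑ b₂, ∑ c, F c * g b₂ c * Real.logb 2 (F c * g b₂ c))
          = ∑ b₂, ∑ c, ∑ b₁, f b₁ c * g b₂ c * Real.logb 2 (F c * g b₂ c) := by
        refine Finset.sum_congr rfl fun b₂ _ => Finset.sum_congr rfl fun c _ => ?_
        refine Eq.symm ?_
        simp only [← Finset.sum_mul]
        rfl
      rw [h1, my_sum_comm3, Finset.sum_comm]
    rw [A2, A3, A4]
    simp only [← Finset.sum_add_distrib]
    exact Finset.sum_congr rfl fun b₁ _ => Finset.sum_congr rfl fun b₂ _ =>
      Finset.sum_congr rfl fun c _ => key b₁ b₂ c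
  have hT : ent p (fun ω => ((Z₁ ω, Z₂ ω), W ω)) = ent p (fun ω => (Z₁ ω, Z₂ ω, W ω)) :=
    my_ent_comp p (fun ω => (Z₁ ω, Z₂ ω, W ω)) (fun x => ((x.1, x.2.1), x.2.2))
      (by rintro ⟨a, b, c⟩ ⟨a', b', c'⟩ h; simp only [Prod.mk.injEq] at h ⊢; tauto)
  unfold condMI condEnt
  rw [hT]
  unfold ent
  linarith [main]


end MyLemmas

def pSplit {V : Type} (κ : Type) [DecidableEq V] (S : Finset V) :
    (V → κ) ≃ (({v // v ∈ S} → κ) × ({v // ¬ v ∈ S} → κ)) :=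
  Equiv.piEquivPiSubtypeProd (fun v => v ∈ S) (fun _ => κ)

theorem pSplit_pos {V κ : Type} [DecidableEq V] (S : Finset V)
    (f : {v // v ∈ S} → κ) (g : {v // ¬ v ∈ S} → κ) (v : V) (h : v ∈ S) :
    (pSplit κ S).symm (f, g) v = f ⟨v, h⟩ := dif_pos h

theorem pSplit_neg {V κ : Type} [DecidableEq V] (S : Finset V)
    (f : {v // v ∈ S} → κ) (g : {v // ¬ v ∈ S} → κ) (v : V) (h : ¬ v ∈ S) :
    (pSplit κ S).symm (f, g) v = g ⟨v, h⟩ := dif_neg h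

def trip {A₁ A₂ B₁ B₂ C₁ C₂ : Type} :
    ((A₁ × A₂) × (B₁ × B₂) × (C₁ × C₂)) ≃ ((A₁ × B₁ × C₁) × (A₂ × B₂ × C₂)) where
  toFun x := ((x.1.1, x.2.1.1, x.2.2.1), (x.1.2, x.2.1.2, x.2.2.2))
  invFun x := ((x.1.1, x.2.1), (x.1.2.1, x.2.2.1), (x.1.2.2, x.2.2.2))
  left_inv x := rfl
  right_inv x := rfl

def splitAll {V : Type} (β γ : Type) [DecidableEq V] (S T : Finset V) :
    ((V → β) × (V → γ) × (V → γ)) ≃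
      ((({v // v ∈ S} → β) × ({v // v ∈ T} → γ) × ({v // v ∈ T} → γ))
        × (({v // ¬ v ∈ S} → β) × ({v // ¬ v ∈ T} → γ) × ({v // ¬ v ∈ T} → γ))) :=
  (Equiv.prodCongr (pSplit β S) (Equiv.prodCongr (pSplit γ T) (pSplit γ T))).trans trip

theorem splitAll_symm {V β γ : Type} [DecidableEq V] (S T : Finset V)
    (ag : {v // v ∈ S} → β) (yg zg : {v // v ∈ T} → γ)
    (af : {v // ¬ v ∈ S} → β) (yf zf : {v // ¬ v ∈ T} → γ) :
    (splitAll β γ S T).symm ((ag, yg, zg), (af, yf, zf))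
      = ((pSplit β S).symm (ag, af), (pSplit γ T).symm (yg, yf), (pSplit γ T).symm (zg, zf)) :=
  rfl

theorem my_prod_split {V M : Type} [Fintype V] [DecidableEq V] [CommMonoid M]
    (S : Finset V) (f : V → M) :
    (∏ v, f v) = (∏ v : {v // v ∈ S}, f v.1) * ∏ v : {v // ¬ v ∈ S}, f v.1 := by
  rw [← Finset.prod_mul_prod_compl S f]
  congr 1
  · exact Finset.prod_subtype S (fun x => Iff.rfl) f
  · exact Finset.prod_subtype Sᶜ (fun x => Finset.mem_compl) f

theorem my_ci_key {Ω V β γ : Type} [Fintype Ω] [Fintype V] [DecidableEq V]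
    [Fintype β] [DecidableEq β] [Fintype γ] [DecidableEq γ]
    (p : Ω → ℝ) (hp : ∀ ω, 0 ≤ p ω)
    (L : ℕ) (O : ℕ → Finset V)
    (hdisj : ∀ i j, i ≠ j → Disjoint (O i) (O j))
    (hcover : ∀ v : V, ∃ l, 1 ≤ l ∧ l ≤ L ∧ v ∈ O l)
    (X : V → Ω → β) (Y Yh : V → Ω → γ)
    (chan : V → (V → β) → γ → ℝ) (quant : V → γ → γ → ℝ)
    (hdep : ∀ v : V, ∀ l, v ∈ O (l + 1) →
      ∀ x x' : V → β, (∀ u ∈ O l, x u = x' u) → chan v x = chan v x')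
    (hfact : ∀ (x : V → β) (y yh : V → γ),
      prOf p (fun ω => ((fun v => X v ω), (fun v => Y v ω), fun v => Yh v ω)) (x, y, yh) =
        (∏ v, prOf p (X v) (x v)) * (∏ v, chan v x (y v)) * ∏ v, quant v (y v) (yh v))
    (b₀ : β) (m : ℕ) (A U D W : Finset V)
    (hA : ∀ v ∈ A, v ∉ O m) (hU : ∀ v ∈ U, v ∉ O (m + 1))
    (hD : D ⊆ O (m + 1)) (hW : W ⊆ O m) :
    condMI p (fun ω => (joint X A ω, joint Yh U ω)) (joint Yh D) (joint X W) = 0 := by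
  classical
  refine my_condMI_vanish p hp (fun ω => (joint X A ω, joint Yh U ω)) (joint Yh D) (joint X W)
    (fun b₁ _ => ∑ q : ({v // ¬ v ∈ O m} → β) × ({v // ¬ v ∈ O (m + 1)} → γ)
        × ({v // ¬ v ∈ O (m + 1)} → γ),
      if ((fun v : ↥A => q.1 ⟨v.1, hA v.1 v.2⟩) = b₁.1
          ∧ (fun v : ↥U => q.2.2 ⟨v.1, hU v.1 v.2⟩) = b₁.2) then
        (∏ v : {v // ¬ v ∈ O m}, prOf p (X v.1) (q.1 v))
          * ((∏ v : {v // ¬ v ∈ O (m + 1)},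
                chan v.1 ((pSplit β (O m)).symm (fun _ => b₀, q.1)) (q.2.1 v))
            * ∏ v : {v // ¬ v ∈ O (m + 1)}, quant v.1 (q.2.1 v) (q.2.2 v))
      else 0)
    (fun d xw => ∑ q : ({v // v ∈ O m} → β) × ({v // v ∈ O (m + 1)} → γ)
        × ({v // v ∈ O (m + 1)} → γ),
      if ((fun v : ↥W => q.1 ⟨v.1, hW v.2⟩) = xw
          ∧ (fun v : ↥D => q.2.2 ⟨v.1, hD v.2⟩) = d) then
        (∏ v : {v // v ∈ O m}, prOf p (X v.1) (q.1 v))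
          * ((∏ v : {v // v ∈ O (m + 1)},
                chan v.1 ((pSplit β (O m)).symm (q.1, fun _ => b₀)) (q.2.1 v))
            * ∏ v : {v // v ∈ O (m + 1)}, quant v.1 (q.2.1 v) (q.2.2 v))
      else 0) ?_
  rintro ⟨x₁, u⟩ d xw
  dsimp only
  have point : ∀ (ag : {v // v ∈ O m} → β) (yg zg : {v // v ∈ O (m + 1)} → γ)
      (af : {v // ¬ v ∈ O m} → β) (yf zf : {v // ¬ v ∈ O (m + 1)} → γ),
      (if ((fun v : ↥A => (pSplit β (O m)).symm (ag, af) v.1,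
              fun v : ↥U => (pSplit γ (O (m + 1))).symm (zg, zf) v.1),
            (fun v : ↥D => (pSplit γ (O (m + 1))).symm (zg, zf) v.1),
            (fun v : ↥W => (pSplit β (O m)).symm (ag, af) v.1)) = ((x₁, u), d, xw) then
          prOf p (fun ω => ((fun v => X v ω), (fun v => Y v ω), fun v => Yh v ω))
            ((pSplit β (O m)).symm (ag, af), (pSplit γ (O (m + 1))).symm (yg, yf),
              (pSplit γ (O (m + 1))).symm (zg, zf))
        else 0)
      = (if ((fun v : ↥W => ag ⟨v.1, hW v.2⟩) = xw
            ∧ (fun v : ↥D => zg ⟨v.1, hD v.2⟩) = d) then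
          (∏ v : {v // v ∈ O m}, prOf p (X v.1) (ag v))
            * ((∏ v : {v // v ∈ O (m + 1)},
                  chan v.1 ((pSplit β (O m)).symm (ag, fun _ => b₀)) (yg v))
              * ∏ v : {v // v ∈ O (m + 1)}, quant v.1 (yg v) (zg v))
        else 0)
        * (if ((fun v : ↥A => af ⟨v.1, hA v.1 v.2⟩) = x₁
            ∧ (fun v : ↥U => zf ⟨v.1, hU v.1 v.2⟩) = u) then
          (∏ v : {v // ¬ v ∈ O m}, prOf p (X v.1) (af v))
            * ((∏ v : {v // ¬ v ∈ O (m + 1)},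
                  chan v.1 ((pSplit β (O m)).symm (fun _ => b₀, af)) (yf v))
              * ∏ v : {v // ¬ v ∈ O (m + 1)}, quant v.1 (yf v) (zf v))
        else 0) := by
    intro ag yg zg af yf zf
    have r1 : (fun v : ↥A => (pSplit β (O m)).symm (ag, af) v.1)
        = (fun v : ↥A => af ⟨v.1, hA v.1 v.2⟩) :=
      funext fun v => pSplit_neg _ _ _ _ (hA v.1 v.2)
    have r2 : (fun v : ↥W => (pSplit β (O m)).symm (ag, af) v.1)
        = (fun v : ↥W => ag ⟨v.1, hW v.2⟩) :=
      funext fun v => pSplit_pos _ _ _ _ (hW v.2)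
    have r3 : (fun v : ↥D => (pSplit γ (O (m + 1))).symm (zg, zf) v.1)
        = (fun v : ↥D => zg ⟨v.1, hD v.2⟩) :=
      funext fun v => pSplit_pos _ _ _ _ (hD v.2)
    have r4 : (fun v : ↥U => (pSplit γ (O (m + 1))).symm (zg, zf) v.1)
        = (fun v : ↥U => zf ⟨v.1, hU v.1 v.2⟩) :=
      funext fun v => pSplit_neg _ _ _ _ (hU v.1 v.2)
    have q1 : (∏ v, prOf p (X v) ((pSplit β (O m)).symm (ag, af) v))
        = (∏ v : {v // v ∈ O m}, prOf p (X v.1) (ag v))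
          * ∏ v : {v // ¬ v ∈ O m}, prOf p (X v.1) (af v) := by
      rw [my_prod_split (O m) (fun v => prOf p (X v) ((pSplit β (O m)).symm (ag, af) v))]
      congr 1
      · exact Finset.prod_congr rfl fun v _ => by rw [pSplit_pos _ _ _ _ v.2]
      · exact Finset.prod_congr rfl fun v _ => by rw [pSplit_neg _ _ _ _ v.2]
    have q2 : (∏ v, chan v ((pSplit β (O m)).symm (ag, af))
          ((pSplit γ (O (m + 1))).symm (yg, yf) v))
        = (∏ v : {v // v ∈ O (m + 1)},
            chan v.1 ((pSplit β (O m)).symm (ag, fun _ => b₀)) (yg v))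
          * ∏ v : {v // ¬ v ∈ O (m + 1)},
            chan v.1 ((pSplit β (O m)).symm (fun _ => b₀, af)) (yf v) := by
      rw [my_prod_split (O (m + 1)) (fun v => chan v ((pSplit β (O m)).symm (ag, af))
        ((pSplit γ (O (m + 1))).symm (yg, yf) v))]
      congr 1
      · refine Finset.prod_congr rfl fun v _ => ?_
        rw [pSplit_pos _ _ _ _ v.2]
        have hc : chan v.1 ((pSplit β (O m)).symm (ag, af))
            = chan v.1 ((pSplit β (O m)).symm (ag, fun _ => b₀)) :=
          hdep v.1 m v.2 _ _ (fun w hw => by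
            rw [pSplit_pos _ _ _ _ hw, pSplit_pos _ _ _ _ hw])
        rw [hc]
      · refine Finset.prod_congr rfl fun v _ => ?_
        rw [pSplit_neg _ _ _ _ v.2]
        obtain ⟨l, hl1, _, hvl⟩ := hcover v.1
        have hl : l - 1 + 1 = l := Nat.succ_pred_eq_of_pos hl1
        have hc : chan v.1 ((pSplit β (O m)).symm (ag, af))
            = chan v.1 ((pSplit β (O m)).symm (fun _ => b₀, af)) := by
          refine hdep v.1 (l - 1) (by rw [hl]; exact hvl) _ _ ?_
          intro w hw
          have hwm : ¬ w ∈ O m := by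
            intro hwm
            by_cases hlm : l - 1 = m
            · rw [← hl, hlm] at hvl
              exact v.2 hvl
            · exact Finset.disjoint_left.1 (hdisj (l - 1) m hlm) hw hwm
          rw [pSplit_neg _ _ _ _ hwm, pSplit_neg _ _ _ _ hwm]
        rw [hc]
    have q3 : (∏ v, quant v ((pSplit γ (O (m + 1))).symm (yg, yf) v)
          ((pSplit γ (O (m + 1))).symm (zg, zf) v))
        = (∏ v : {v // v ∈ O (m + 1)}, quant v.1 (yg v) (zg v))
          * ∏ v : {v // ¬ v ∈ O (m + 1)}, quant v.1 (yf v) (zf v) := by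
      rw [my_prod_split (O (m + 1)) (fun v => quant v ((pSplit γ (O (m + 1))).symm (yg, yf) v)
        ((pSplit γ (O (m + 1))).symm (zg, zf) v))]
      congr 1
      · exact Finset.prod_congr rfl fun v _ => by
          rw [pSplit_pos _ _ _ _ v.2, pSplit_pos _ _ _ _ v.2]
      · exact Finset.prod_congr rfl fun v _ => by
          rw [pSplit_neg _ _ _ _ v.2, pSplit_neg _ _ _ _ v.2]
    rw [hfact, q1, q2, q3, r1, r2, r3, r4]
    simp only [Prod.mk.injEq]
    split_ifs with h1 h2 h3 h4 h5 h6 h7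
    · ring
    · exact absurd h1.1 h3
    · exact absurd ⟨h1.2.2, h1.2.1⟩ h2
    · exact absurd ⟨h1.2.2, h1.2.1⟩ h2
    · exact absurd ⟨h6, h5.2, h5.1⟩ h1
    · simp
    · simp
    · simp
  calc prOf p (fun ω => ((joint X A ω, joint Yh U ω), joint Yh D ω, joint X W ω))
        ((x₁, u), d, xw)
      = ∑ s : (V → β) × (V → γ) × (V → γ),
          if (((fun v : ↥A => s.1 v.1), (fun v : ↥U => s.2.2 v.1)),
              (fun v : ↥D => s.2.2 v.1), (fun v : ↥W => s.1 v.1)) = ((x₁, u), d, xw) then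
            prOf p (fun ω => ((fun v => X v ω), (fun v => Y v ω), fun v => Yh v ω)) s
          else 0 :=
        my_prOf_comp p (fun ω => ((fun v => X v ω), (fun v => Y v ω), fun v => Yh v ω))
          (fun s => (((fun v : ↥A => s.1 v.1), (fun v : ↥U => s.2.2 v.1)),
            (fun v : ↥D => s.2.2 v.1), (fun v : ↥W => s.1 v.1))) ((x₁, u), d, xw)
    _ = ∑ q, (fun s : (V → β) × (V → γ) × (V → γ) =>
          if (((fun v : ↥A => s.1 v.1), (fun v : ↥U => s.2.2 v.1)),
              (fun v : ↥D => s.2.2 v.1), (fun v : ↥W => s.1 v.1)) = ((x₁, u), d, xw) then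
            prOf p (fun ω => ((fun v => X v ω), (fun v => Y v ω), fun v => Yh v ω)) s
          else 0) ((splitAll β γ (O m) (O (m + 1))).symm q) :=
        (Equiv.sum_comp (splitAll β γ (O m) (O (m + 1))).symm _).symm
    _ = ∑ qg, ∑ qf, (fun s : (V → β) × (V → γ) × (V → γ) =>
          if (((fun v : ↥A => s.1 v.1), (fun v : ↥U => s.2.2 v.1)),
              (fun v : ↥D => s.2.2 v.1), (fun v : ↥W => s.1 v.1)) = ((x₁, u), d, xw) then
            prOf p (fun ω => ((fun v => X v ω), (fun v => Y v ω), fun v => Yh v ω)) s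
          else 0) ((splitAll β γ (O m) (O (m + 1))).symm (qg, qf)) :=
        Fintype.sum_prod_type _
    _ = (∑ qg : ({v // v ∈ O m} → β) × ({v // v ∈ O (m + 1)} → γ)
            × ({v // v ∈ O (m + 1)} → γ),
          if ((fun v : ↥W => qg.1 ⟨v.1, hW v.2⟩) = xw
              ∧ (fun v : ↥D => qg.2.2 ⟨v.1, hD v.2⟩) = d) then
            (∏ v : {v // v ∈ O m}, prOf p (X v.1) (qg.1 v))
              * ((∏ v : {v // v ∈ O (m + 1)},
                    chan v.1 ((pSplit β (O m)).symm (qg.1, fun _ => b₀)) (qg.2.1 v))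
                * ∏ v : {v // v ∈ O (m + 1)}, quant v.1 (qg.2.1 v) (qg.2.2 v))
          else 0)
        * (∑ qf : ({v // ¬ v ∈ O m} → β) × ({v // ¬ v ∈ O (m + 1)} → γ)
            × ({v // ¬ v ∈ O (m + 1)} → γ),
          if ((fun v : ↥A => qf.1 ⟨v.1, hA v.1 v.2⟩) = x₁
              ∧ (fun v : ↥U => qf.2.2 ⟨v.1, hU v.1 v.2⟩) = u) then
            (∏ v : {v // ¬ v ∈ O m}, prOf p (X v.1) (qf.1 v))
              * ((∏ v : {v // ¬ v ∈ O (m + 1)},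
                    chan v.1 ((pSplit β (O m)).symm (fun _ => b₀, qf.1)) (qf.2.1 v))
                * ∏ v : {v // ¬ v ∈ O (m + 1)}, quant v.1 (qf.2.1 v) (qf.2.2 v))
          else 0) := by
        rw [Finset.sum_mul_sum]
        refine Finset.sum_congr rfl fun qg _ => Finset.sum_congr rfl fun qf _ => ?_
        obtain ⟨ag, yg, zg⟩ := qg
        obtain ⟨af, yf, zf⟩ := qf
        rw [splitAll_symm]
        exact point ag yg zg af yf zf
    _ = _ := mul_comm _ _

def res {V κ : Type} {A B : Finset V} (h : A ⊆ B) (x : ↥B → κ) : ↥A → κ :=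
  fun a => x ⟨a.1, h a.2⟩

theorem my_res_pair_inj {V κ : Type} {A B C : Finset V} (hA : A ⊆ C) (hB : B ⊆ C)
    (hcov : ∀ v ∈ C, v ∈ A ∨ v ∈ B) :
    Function.Injective (fun (x : ↥C → κ) => ((res hA x : ↥A → κ), (res hB x : ↥B → κ))) := by
  intro x y hxy
  rw [Prod.mk.injEq] at hxy
  funext v
  rcases hcov v.1 v.2 with h | h
  · exact congrFun hxy.1 ⟨v.1, h⟩
  · exact congrFun hxy.2 ⟨v.1, h⟩

theorem my_gstep_inj {V β γ : Type} {A' W' C U : Finset V}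
    (hA : A' ⊆ C) (hW : W' ⊆ C) (hcov : ∀ v ∈ C, v ∈ A' ∨ v ∈ W') :
    Function.Injective (fun (q : (↥U → γ) × (↥C → β)) =>
      (((res hA q.2 : ↥A' → β), q.1), (res hW q.2 : ↥W' → β))) := by
  intro q q' h
  rw [Prod.mk.injEq, Prod.mk.injEq] at h
  obtain ⟨⟨h1, h2⟩, h3⟩ := h
  refine Prod.ext h2 ?_
  funext v
  rcases hcov v.1 v.2 with h | h
  · exact congrFun h1 ⟨v.1, h⟩
  · exact congrFun h3 ⟨v.1, h⟩

section Assembly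
variable {Ω V β γ : Type} [Fintype Ω] [Fintype V] [DecidableEq V]
    [Fintype β] [DecidableEq β] [Fintype γ] [DecidableEq γ]
    (p : Ω → ℝ)

/-- Merging a pair of `X`-joints in the conditioning variable. -/
theorem my_condEnt_mergeX {δ : Type} [Fintype δ] [DecidableEq δ]
    (X : V → Ω → β) (Z : Ω → δ) (A B : Finset V) :
    condEnt p Z (fun ω => (joint X A ω, joint X B ω)) = condEnt p Z (joint X (A ∪ B)) := by
  have hA : A ⊆ A ∪ B := Finset.subset_union_left
  have hB : B ⊆ A ∪ B := Finset.subset_union_right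
  have hcov : ∀ v ∈ A ∪ B, v ∈ A ∨ v ∈ B := fun v hv => Finset.mem_union.1 hv
  have e1 : ent p (fun ω => (joint X A ω, joint X B ω)) = ent p (joint X (A ∪ B)) :=
    my_ent_comp p (joint X (A ∪ B))
      (fun x => ((res hA x : ↥A → β), (res hB x : ↥B → β))) (my_res_pair_inj hA hB hcov)
  have e2 : ent p (fun ω => (Z ω, (joint X A ω, joint X B ω)))
      = ent p (fun ω => (Z ω, joint X (A ∪ B) ω)) :=
    my_ent_comp p (fun ω => (Z ω, joint X (A ∪ B) ω))
      (Prod.map id (fun x => ((res hA x : ↥A → β), (res hB x : ↥B → β))))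
      (Function.Injective.prodMap Function.injective_id (my_res_pair_inj hA hB hcov))
  unfold condEnt
  rw [e1, e2]

/-- Merging a pair of `Yh`-joints in the main variable. -/
theorem my_condEnt_mergeY {δ : Type} [Fintype δ] [DecidableEq δ]
    (Yh : V → Ω → γ) (Z : Ω → δ) (A B : Finset V) :
    condEnt p (fun ω => (joint Yh A ω, joint Yh B ω)) Z = condEnt p (joint Yh (A ∪ B)) Z := by
  have hA : A ⊆ A ∪ B := Finset.subset_union_left
  have hB : B ⊆ A ∪ B := Finset.subset_union_right
  have hcov : ∀ v ∈ A ∪ B, v ∈ A ∨ v ∈ B := fun v hv => Finset.mem_union.1 hv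
  have e2 : ent p (fun ω => ((joint Yh A ω, joint Yh B ω), Z ω))
      = ent p (fun ω => (joint Yh (A ∪ B) ω, Z ω)) :=
    my_ent_comp p (fun ω => (joint Yh (A ∪ B) ω, Z ω))
      (Prod.map (fun x => ((res hA x : ↥A → γ), (res hB x : ↥B → γ))) id)
      (Function.Injective.prodMap (my_res_pair_inj hA hB hcov) Function.injective_id)
  unfold condEnt
  rw [e2]

theorem my_condEnt_emptyY {δ : Type} [Fintype δ] [DecidableEq δ]
    (hp1 : ∑ ω, p ω = 1) (Yh : V → Ω → γ) (Z : Ω → δ) :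
    condEnt p (joint Yh (∅ : Finset V)) Z = 0 := by
  have h1 : (fun ω => (joint Yh (∅ : Finset V) ω, Z ω))
      = fun ω => ((fun v : ↥(∅ : Finset V) => (Finset.notMem_empty v.1 v.2).elim), Z ω) := by
    funext ω
    refine Prod.ext ?_ rfl
    funext v
    exact (Finset.notMem_empty v.1 v.2).elim
  have e : ent p (fun ω => (joint Yh (∅ : Finset V) ω, Z ω)) = ent p Z := by
    rw [h1]
    exact my_ent_comp p Z (fun z => ((fun v : ↥(∅ : Finset V) =>
      (Finset.notMem_empty v.1 v.2).elim), z)) (fun a b h => congrArg Prod.snd h)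
  unfold condEnt
  rw [e]
  ring

theorem my_step (hp : ∀ ω, 0 ≤ p ω)
    (L : ℕ) (O : ℕ → Finset V)
    (hdisj : ∀ i j, i ≠ j → Disjoint (O i) (O j))
    (hcover : ∀ v : V, ∃ l, 1 ≤ l ∧ l ≤ L ∧ v ∈ O l)
    (X : V → Ω → β) (Y Yh : V → Ω → γ)
    (chan : V → (V → β) → γ → ℝ) (quant : V → γ → γ → ℝ)
    (hdep : ∀ v : V, ∀ l, v ∈ O (l + 1) →
      ∀ x x' : V → β, (∀ u ∈ O l, x u = x' u) → chan v x = chan v x')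
    (hfact : ∀ (x : V → β) (y yh : V → γ),
      prOf p (fun ω => ((fun v => X v ω), (fun v => Y v ω), fun v => Yh v ω)) (x, y, yh) =
        (∏ v, prOf p (X v) (x v)) * (∏ v, chan v x (y v)) * ∏ v, quant v (y v) (yh v))
    (b₀ : β) (Ωs : Finset V) (m : ℕ) (C : Finset V)
    (U : Finset V) (hU : ∀ v ∈ U, v ∉ O (m + 1)) :
    condEnt p (joint Yh (O (m + 1) \ Ωs)) (fun ω => (joint Yh U ω, joint X C ω))
      = condEnt p (joint Yh (O (m + 1) \ Ωs)) (joint X (O m ∩ C)) := by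
  set A' : Finset V := C \ (O m ∩ C) with hA'def
  set W' : Finset V := O m ∩ C with hW'def
  have hA' : ∀ v ∈ A', v ∉ O m := by
    intro v hv hvm
    rw [hA'def] at hv
    rw [Finset.mem_sdiff] at hv
    exact hv.2 (Finset.mem_inter.2 ⟨hvm, hv.1⟩)
  have h0 : condMI p (fun ω => (joint X A' ω, joint Yh U ω)) (joint Yh (O (m + 1) \ Ωs))
      (joint X W') = 0 :=
    my_ci_key p hp L O hdisj hcover X Y Yh chan quant hdep hfact b₀ m A' U
      (O (m + 1) \ Ωs) W' hA' hU Finset.sdiff_subset Finset.inter_subset_left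
  have h1 : condMI p (fun ω => (joint X A' ω, joint Yh U ω)) (joint Yh (O (m + 1) \ Ωs))
        (joint X W')
      = condEnt p (joint Yh (O (m + 1) \ Ωs)) (joint X W')
        - condEnt p (joint Yh (O (m + 1) \ Ωs))
            (fun ω => ((joint X A' ω, joint Yh U ω), joint X W' ω)) :=
    my_condMI_sub p _ _ _
  rw [h0] at h1
  have hAC : A' ⊆ C := Finset.sdiff_subset
  have hWC : W' ⊆ C := Finset.inter_subset_right
  have hcov : ∀ v ∈ C, v ∈ A' ∨ v ∈ W' := by
    intro v hv
    by_cases h : v ∈ W'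
    · exact Or.inr h
    · exact Or.inl (Finset.mem_sdiff.2 ⟨hv, h⟩)
  have e1 : ent p (fun ω => ((joint X A' ω, joint Yh U ω), joint X W' ω))
      = ent p (fun ω => (joint Yh U ω, joint X C ω)) :=
    my_ent_comp p (fun ω => (joint Yh U ω, joint X C ω))
      (fun q => (((res hAC q.2 : ↥A' → β), q.1), (res hWC q.2 : ↥W' → β)))
      (my_gstep_inj hAC hWC hcov)
  have e2 : ent p (fun ω => (joint Yh (O (m + 1) \ Ωs) ω,
        ((joint X A' ω, joint Yh U ω), joint X W' ω)))
      = ent p (fun ω => (joint Yh (O (m + 1) \ Ωs) ω, (joint Yh U ω, joint X C ω))) :=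
    my_ent_comp p (fun ω => (joint Yh (O (m + 1) \ Ωs) ω, (joint Yh U ω, joint X C ω)))
      (Prod.map id (fun q => (((res hAC q.2 : ↥A' → β), q.1), (res hWC q.2 : ↥W' → β))))
      (Function.Injective.prodMap Function.injective_id (my_gstep_inj hAC hWC hcov))
  have e3 : condEnt p (joint Yh (O (m + 1) \ Ωs)) (fun ω => (joint Yh U ω, joint X C ω))
      = condEnt p (joint Yh (O (m + 1) \ Ωs))
          (fun ω => ((joint X A' ω, joint Yh U ω), joint X W' ω)) := by
    unfold condEnt
    rw [e1, e2]
  rw [e3]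
  linarith [h1]

theorem my_chain (hp : ∀ ω, 0 ≤ p ω) (hp1 : ∑ ω, p ω = 1)
    (L : ℕ) (O : ℕ → Finset V)
    (hdisj : ∀ i j, i ≠ j → Disjoint (O i) (O j))
    (hcover : ∀ v : V, ∃ l, 1 ≤ l ∧ l ≤ L ∧ v ∈ O l)
    (X : V → Ω → β) (Y Yh : V → Ω → γ)
    (chan : V → (V → β) → γ → ℝ) (quant : V → γ → γ → ℝ)
    (hdep : ∀ v : V, ∀ l, v ∈ O (l + 1) →
      ∀ x x' : V → β, (∀ u ∈ O l, x u = x' u) → chan v x = chan v x')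
    (hfact : ∀ (x : V → β) (y yh : V → γ),
      prOf p (fun ω => ((fun v => X v ω), (fun v => Y v ω), fun v => Yh v ω)) (x, y, yh) =
        (∏ v, prOf p (X v) (x v)) * (∏ v, chan v x (y v)) * ∏ v, quant v (y v) (yh v))
    (b₀ : β) (Ωs : Finset V) (C : Finset V) :
    ∀ m : ℕ, condEnt p (joint Yh (((range m).biUnion fun l => O (l + 1)) \ Ωs)) (joint X C)
      = ∑ l ∈ range m, condEnt p (joint Yh (O (l + 1) \ Ωs)) (joint X (O l ∩ C)) := by
  intro m
  induction m with
  | zero =>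
    rw [Finset.range_zero, Finset.biUnion_empty, Finset.empty_sdiff, Finset.sum_empty]
    exact my_condEnt_emptyY p hp1 Yh (joint X C)
  | succ m ih =>
    have hsplit : ((range (m + 1)).biUnion fun l => O (l + 1)) \ Ωs
        = (((range m).biUnion fun l => O (l + 1)) \ Ωs) ∪ (O (m + 1) \ Ωs) := by
      rw [Finset.range_add_one, Finset.biUnion_insert, Finset.union_sdiff_distrib,
        Finset.union_comm]
    rw [hsplit, Finset.sum_range_succ, ← ih]
    set Um : Finset V := ((range m).biUnion fun l => O (l + 1)) \ Ωs with hUmdef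
    have hU : ∀ v ∈ Um, v ∉ O (m + 1) := by
      intro v hv hvm
      rw [hUmdef, Finset.mem_sdiff, Finset.mem_biUnion] at hv
      obtain ⟨⟨l, hl, hvl⟩, -⟩ := hv
      rw [Finset.mem_range] at hl
      exact Finset.disjoint_left.1 (hdisj (l + 1) (m + 1) (by omega)) hvl hvm
    have hsub1 : Um ⊆ Um ∪ (O (m + 1) \ Ωs) := Finset.subset_union_left
    have hsub2 : O (m + 1) \ Ωs ⊆ Um ∪ (O (m + 1) \ Ωs) := Finset.subset_union_right
    have hcov2 : ∀ v ∈ Um ∪ (O (m + 1) \ Ωs), v ∈ Um ∨ v ∈ O (m + 1) \ Ωs :=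
      fun v hv => Finset.mem_union.1 hv
    have esplit : condEnt p (joint Yh (Um ∪ (O (m + 1) \ Ωs))) (joint X C)
        = condEnt p (fun ω => (joint Yh Um ω, joint Yh (O (m + 1) \ Ωs) ω)) (joint X C) :=
      (my_condEnt_mergeY p Yh (joint X C) Um (O (m + 1) \ Ωs)).symm
    rw [esplit, my_condEnt_chain p (joint Yh Um) (joint Yh (O (m + 1) \ Ωs)) (joint X C)]
    congr 1
    rw [my_step p hp L O hdisj hcover X Y Yh chan quant hdep hfact b₀ Ωs m C Um hU]

end Assembly

theorem my_condMI_trivial {Ω : Type} [Fintype Ω] (p : Ω → ℝ) (hp1 : ∑ ω, p ω = 1)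
    {β₁ β₂ γ' : Type} [Fintype β₁] [DecidableEq β₁] [Fintype β₂] [DecidableEq β₂]
    [Fintype γ'] [DecidableEq γ'] [Subsingleton β₁] [Subsingleton β₂] [Subsingleton γ']
    (Z₁ : Ω → β₁) (Z₂ : Ω → β₂) (W : Ω → γ') : condMI p Z₁ Z₂ W = 0 := by
  haveI : Subsingleton (β₁ × γ') :=
    ⟨fun a b => Prod.ext (Subsingleton.elim _ _) (Subsingleton.elim _ _)⟩
  haveI : Subsingleton (β₂ × γ') :=
    ⟨fun a b => Prod.ext (Subsingleton.elim _ _) (Subsingleton.elim _ _)⟩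
  haveI : Subsingleton (β₁ × β₂) :=
    ⟨fun a b => Prod.ext (Subsingleton.elim _ _) (Subsingleton.elim _ _)⟩
  haveI : Subsingleton ((β₁ × β₂) × γ') :=
    ⟨fun a b => Prod.ext (Subsingleton.elim _ _) (Subsingleton.elim _ _)⟩
  unfold condMI condEnt
  rw [my_ent_subsingleton p hp1, my_ent_subsingleton p hp1, my_ent_subsingleton p hp1,
    my_ent_subsingleton p hp1]
  ring

theorem my_sub_trivial {V κ : Type} (hV : IsEmpty V) (A : Finset V) :
    Subsingleton (↥A → κ) :=
  ⟨fun f g => funext fun a => (hV.false a.1).elim⟩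


/-- For the layered product-form distribution, the cut value built from the
mutual-information capacities collapses:
`Σ_l I(X_{Ω∩O_l}; Ŷ_{O_{l+1}\Ω} | X_{O_l\Ω}) = I(Ŷ_{Ωᶜ}; X_Ω | X_{Ωᶜ})`. -/
theorem stmt16 {Ω V β γ : Type} [Fintype Ω] [Fintype V] [DecidableEq V]
    [Fintype β] [DecidableEq β] [Fintype γ] [DecidableEq γ]
    (p : Ω → ℝ) (hp : ∀ ω, 0 ≤ p ω) (hp1 : ∑ ω, p ω = 1)
    (L : ℕ) (hL : 2 ≤ L) (O : ℕ → Finset V)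
    (hdisj : ∀ i j, i ≠ j → Disjoint (O i) (O j))
    (hcover : ∀ v : V, ∃ l, 1 ≤ l ∧ l ≤ L ∧ v ∈ O l)
    (X : V → Ω → β) (Y Yh : V → Ω → γ)
    (chan : V → (V → β) → γ → ℝ) (quant : V → γ → γ → ℝ)
    (hdep : ∀ v : V, ∀ l, v ∈ O (l + 1) →
      ∀ x x' : V → β, (∀ u ∈ O l, x u = x' u) → chan v x = chan v x')
    (hfact : ∀ (x : V → β) (y yh : V → γ),
      prOf p (fun ω => ((fun v => X v ω), (fun v => Y v ω), fun v => Yh v ω)) (x, y, yh) =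
        (∏ v, prOf p (X v) (x v)) * (∏ v, chan v x (y v)) * ∏ v, quant v (y v) (yh v))
    (Ωs : Finset V) :
    ∑ l ∈ Finset.Ico 1 L,
        condMI p (joint X (Ωs ∩ O l)) (joint Yh (O (l + 1) \ Ωs)) (joint X (O l \ Ωs)) =
      condMI p (joint Yh Ωsᶜ) (joint X Ωs) (joint X Ωsᶜ) := by
  classical
  rcases isEmpty_or_nonempty V with hV | hV
  · -- degenerate case: no nodes at all
    have hz : ∀ (A B C' : Finset V) (Z₁ : Ω → ↥A → β) (Z₂ : Ω → ↥B → γ) (W : Ω → ↥C' → β),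
        condMI p Z₁ Z₂ W = 0 := by
      intro A B C' Z₁ Z₂ W
      haveI := my_sub_trivial (κ := β) hV A
      haveI := my_sub_trivial (κ := γ) hV B
      haveI := my_sub_trivial (κ := β) hV C'
      exact my_condMI_trivial p hp1 Z₁ Z₂ W
    have hz2 : ∀ (A B C' : Finset V) (Z₁ : Ω → ↥A → γ) (Z₂ : Ω → ↥B → β) (W : Ω → ↥C' → β),
        condMI p Z₁ Z₂ W = 0 := by
      intro A B C' Z₁ Z₂ W
      haveI := my_sub_trivial (κ := γ) hV A
      haveI := my_sub_trivial (κ := β) hV B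
      haveI := my_sub_trivial (κ := β) hV C'
      exact my_condMI_trivial p hp1 Z₁ Z₂ W
    rw [Finset.sum_eq_zero fun l _ => hz _ _ _ _ _ _, hz2 _ _ _ _ _ _]
  · -- main case
    have hΩ : Nonempty Ω := by
      by_contra h
      rw [not_nonempty_iff] at h
      rw [Finset.univ_eq_empty, Finset.sum_empty] at hp1
      norm_num at hp1
    obtain ⟨ω₀⟩ := hΩ
    obtain ⟨v₀⟩ := hV
    set b₀ : β := X v₀ ω₀ with hb₀
    have hO0 : O 0 = ∅ := by
      rw [Finset.eq_empty_iff_forall_notMem]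
      intro v hv
      obtain ⟨l, hl1, _, hvl⟩ := hcover v
      exact Finset.disjoint_left.1 (hdisj 0 l (by omega)) hv hvl
    have hUL : ((range L).biUnion fun l => O (l + 1)) \ Ωs = Ωsᶜ := by
      ext v
      simp only [Finset.mem_sdiff, Finset.mem_biUnion, Finset.mem_range, Finset.mem_compl]
      constructor
      · rintro ⟨-, h⟩
        exact h
      · intro h
        obtain ⟨l, hl1, hlL, hv⟩ := hcover v
        refine ⟨⟨l - 1, by omega, ?_⟩, h⟩
        have e : l - 1 + 1 = l := by omega
        rw [e]
        exact hv
    have hmain : ∀ C : Finset V, condEnt p (joint Yh Ωsᶜ) (joint X C)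
        = ∑ l ∈ range L, condEnt p (joint Yh (O (l + 1) \ Ωs)) (joint X (O l ∩ C)) := by
      intro C
      have h := my_chain p hp hp1 L O hdisj hcover X Y Yh chan quant hdep hfact b₀ Ωs C L
      rwa [hUL] at h
    -- rewrite each LHS term
    have hL1 : ∀ l, condMI p (joint X (Ωs ∩ O l)) (joint Yh (O (l + 1) \ Ωs))
          (joint X (O l \ Ωs))
        = condEnt p (joint Yh (O (l + 1) \ Ωs)) (joint X (O l \ Ωs))
          - condEnt p (joint Yh (O (l + 1) \ Ωs)) (joint X (O l)) := by
      intro l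
      have h1 : condMI p (joint X (Ωs ∩ O l)) (joint Yh (O (l + 1) \ Ωs))
            (joint X (O l \ Ωs))
          = condEnt p (joint Yh (O (l + 1) \ Ωs)) (joint X (O l \ Ωs))
            - condEnt p (joint Yh (O (l + 1) \ Ωs))
                (fun ω => (joint X (Ωs ∩ O l) ω, joint X (O l \ Ωs) ω)) :=
        my_condMI_sub p _ _ _
      have hun : (Ωs ∩ O l) ∪ (O l \ Ωs) = O l := by
        ext v
        simp only [Finset.mem_union, Finset.mem_inter, Finset.mem_sdiff]
        tauto
      rw [h1, my_condEnt_mergeX p X (joint Yh (O (l + 1) \ Ωs)) (Ωs ∩ O l) (O l \ Ωs), hun]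
    have hR1 : condMI p (joint Yh Ωsᶜ) (joint X Ωs) (joint X Ωsᶜ)
        = condEnt p (joint Yh Ωsᶜ) (joint X Ωsᶜ)
          - condEnt p (joint Yh Ωsᶜ) (joint X univ) := by
      rw [my_condMI_comm]
      have h1 : condMI p (joint X Ωs) (joint Yh Ωsᶜ) (joint X Ωsᶜ)
          = condEnt p (joint Yh Ωsᶜ) (joint X Ωsᶜ)
            - condEnt p (joint Yh Ωsᶜ) (fun ω => (joint X Ωs ω, joint X Ωsᶜ ω)) :=
        my_condMI_sub p _ _ _
      rw [h1, my_condEnt_mergeX p X (joint Yh Ωsᶜ) Ωs Ωsᶜ, Finset.union_compl]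
    rw [Finset.sum_congr rfl fun l _ => hL1 l, hR1, hmain Ωsᶜ, hmain univ,
      ← Finset.sum_sub_distrib, Finset.range_eq_Ico,
      Finset.sum_eq_sum_Ico_succ_bot (by omega : 0 < L)]
    have h00 : condEnt p (joint Yh (O (0 + 1) \ Ωs)) (joint X (O 0 ∩ Ωsᶜ))
        - condEnt p (joint Yh (O (0 + 1) \ Ωs)) (joint X (O 0 ∩ univ)) = 0 := by
      rw [hO0, Finset.empty_inter, Finset.empty_inter, sub_self]
    rw [h00, zero_add]
    refine Finset.sum_congr rfl fun l hl => ?_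
    have e : O l ∩ Ωsᶜ = O l \ Ωs := by
      ext v
      simp only [Finset.mem_inter, Finset.mem_compl, Finset.mem_sdiff]
    rw [Finset.inter_univ, e]

end
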